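/- Let ρ be a regular representation of A_{q,n} on an n-dimensional k-vector space V. Then the quotient A_{q,n}/ker(ρ) (equivalently, the image ρ(A_{q,n}) ⊆ End_k(V)) is isomorphic as a k-algebra to k[z]/(z^n). -/

import Mathlib

set_option synthInstance.maxHeartbeats 1000000
set_option maxHeartbeats 1000000

noncomputable section

/-- The ring of `n`-nil polynomials `A_{q,n} = k[x_1,…,x_q]/m_0^n`. -/
abbrev Aqn (k : Type) [Field k] (q n : ℕ) : Type :=
  MvPolynomial (Fin q) k ⧸
    (Ideal.span (Set.range (MvPolynomial.X : Fin q → MvPolynomial (Fin q) k))) ^ n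

/-- The image of the variable `x_i` in `A_{q,n}`. -/
def xA (k : Type) [Field k] (q n : ℕ) (i : Fin q) : Aqn k q n :=
  Ideal.Quotient.mk _ (MvPolynomial.X i)

/-- The maximal ideal `m` of `A_{q,n}` generated by `x_1, …, x_q`. -/
def mA (k : Type) [Field k] (q n : ℕ) : Ideal (Aqn k q n) :=
  Ideal.span (Set.range (xA k q n))

/-- Auxiliary: if `N^(n-1) v ≠ 0` and `N^n = 0`, then `v, N v, …, N^(n-1) v` are
linearly independent. -/
lemma aux_li {k V : Type} [Field k] [AddCommGroup V] [Module k V] (n : ℕ)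
    (N : Module.End k V) (hNn : N ^ n = 0) (v : V) (hv : (N ^ (n - 1)) v ≠ 0) :
    LinearIndependent k (fun i : Fin n => (N ^ (i : ℕ)) v) := by
  rw [Fintype.linearIndependent_iff]
  intro g hg
  have key : ∀ m : ℕ, ∀ i : Fin n, (i : ℕ) = m → g i = 0 := by
    intro m
    induction m using Nat.strong_induction_on with
    | _ m IH =>
      intro i him
      have him' : m ≤ n - 1 := by omega
      have h2 := congrArg (fun w => (N ^ (n - 1 - m)) w) hg
      simp only [map_sum, map_smul, map_zero] at h2
      have h3 : ∀ j : Fin n, g j • (N ^ (n - 1 - m)) ((N ^ (j : ℕ)) v)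
          = g j • (N ^ (n - 1 - m + (j : ℕ))) v := by
        intro j
        rw [pow_add, Module.End.mul_apply]
      rw [Finset.sum_congr rfl (fun j _ => h3 j)] at h2
      rw [Finset.sum_eq_single i] at h2
      · rw [him, Nat.sub_add_cancel him'] at h2
        rcases smul_eq_zero.mp h2 with h | h
        · exact h
        · exact absurd h hv
      · intro j _ hji
        rcases lt_or_gt_of_ne (fun h : (j : ℕ) = (i : ℕ) => hji (Fin.ext h)) with h | h
        · rw [IH (j : ℕ) (by omega) j rfl, zero_smul]
        · have : N ^ (n - 1 - m + (j : ℕ)) = 0 :=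
            pow_eq_zero_of_le (by omega) hNn
          rw [this, LinearMap.zero_apply, smul_zero]
      · intro h; exact absurd (Finset.mem_univ i) h
  exact fun i => key (i : ℕ) i rfl

/-- if `ρ` is a regular representation of `A_{q,n}` on an `n`-dimensional
`k`-vector space `V`, then `A_{q,n}/ker ρ` is isomorphic as a `k`-algebra to `k[z]/(z^n)`. -/
theorem regular_rep_image_iso (k : Type) [Field k] (q n : ℕ) (hq : 1 ≤ q) (hn : 2 ≤ n)
    (V : Type) [AddCommGroup V] [Module k V] [FiniteDimensional k V]
    (hdim : Module.finrank k V = n)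
    (ρ : Aqn k q n →ₐ[k] Module.End k V)
    (hreg : ∃ u ∈ mA k q n, ρ (u ^ (n - 1)) ≠ 0) :
    Nonempty ((Aqn k q n ⧸ RingHom.ker ρ) ≃ₐ[k]
      (Polynomial k ⧸ Ideal.span {(Polynomial.X : Polynomial k) ^ n})) := by
  classical
  obtain ⟨u, hu, hru⟩ := hreg
  set N : Module.End k V := ρ u with hNdef
  -- `m^n = 0` in `A_{q,n}`
  have hmA : (mA k q n) ^ n = ⊥ := by
    have h1 : mA k q n = Ideal.map (Ideal.Quotient.mk _)
        (Ideal.span (Set.range (MvPolynomial.X : Fin q → MvPolynomial (Fin q) k))) := by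
      rw [Ideal.map_span, ← Set.range_comp]
      rfl
    rw [h1, ← Ideal.map_pow, Ideal.map_quotient_self]
  have hun : u ^ n = 0 := by
    have h2 : u ^ n ∈ (mA k q n) ^ n := Ideal.pow_mem_pow hu n
    rwa [hmA, Ideal.mem_bot] at h2
  have hNn : N ^ n = 0 := by rw [hNdef, ← map_pow, hun, map_zero]
  have hNn1 : N ^ (n - 1) ≠ 0 := by rw [hNdef, ← map_pow]; exact hru
  -- a cyclic vector
  obtain ⟨v, hv⟩ : ∃ v : V, (N ^ (n - 1)) v ≠ 0 := by
    by_contra h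
    push_neg at h
    exact hNn1 (LinearMap.ext h)
  have li := aux_li n N hNn v hv
  have : Nonempty (Fin n) := ⟨⟨0, by omega⟩⟩
  let b : Module.Basis (Fin n) k V :=
    basisOfLinearIndependentOfCardEqFinrank li (by simp [hdim])
  have hb : ∀ i : Fin n, b i = (N ^ (i : ℕ)) v := fun i => by
    simp [b, coe_basisOfLinearIndependentOfCardEqFinrank]
  -- the range of ρ is the range of `aeval N`
  have hrange : ρ.range = (Polynomial.aeval N : Polynomial k →ₐ[k] Module.End k V).range := by
    apply le_antisymm
    · rintro T ⟨a, rfl⟩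
      rw [← Algebra.adjoin_singleton_eq_range_aeval]
      have hcomm : Commute N (ρ a) := by
        rw [hNdef]
        simp only [Commute, SemiconjBy, ← map_mul, mul_comm]
      set c : Fin n → k := fun j => b.repr (ρ a v) j with hc
      have hPT : ρ a = ∑ j : Fin n, c j • N ^ (j : ℕ) := by
        apply b.ext
        intro i
        have hTv : ρ a v = ∑ j : Fin n, c j • (N ^ (j : ℕ)) v := by
          conv_lhs => rw [← b.sum_repr (ρ a v)]
          exact Finset.sum_congr rfl fun j _ => by rw [hb j]
        calc (ρ a) (b i) = (ρ a) ((N ^ (i : ℕ)) v) := by rw [hb i]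
          _ = (N ^ (i : ℕ)) ((ρ a) v) := by
              rw [← Module.End.mul_apply, ← (hcomm.pow_left (i : ℕ)).eq,
                Module.End.mul_apply]
          _ = ∑ j : Fin n, c j • (N ^ ((i : ℕ) + (j : ℕ))) v := by
              rw [hTv, map_sum]
              exact Finset.sum_congr rfl fun j _ => by
                rw [map_smul, pow_add, Module.End.mul_apply]
          _ = (∑ j : Fin n, c j • N ^ (j : ℕ)) (b i) := by
              rw [hb i, LinearMap.sum_apply]
              exact Finset.sum_congr rfl fun j _ => by
                rw [LinearMap.smul_apply, ← Module.End.mul_apply, ← pow_add,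
                  Nat.add_comm]
      show ρ a ∈ Algebra.adjoin k {N}
      rw [hPT]
      exact Subalgebra.sum_mem _ fun j _ => Subalgebra.smul_mem _
        (pow_mem (Algebra.self_mem_adjoin_singleton k N) _) _
    · rw [← Algebra.adjoin_singleton_eq_range_aeval]
      apply Algebra.adjoin_le
      rintro _ rfl
      exact ⟨u, rfl⟩
  -- the kernel of `aeval N` is `(X^n)`
  have hXn0 : (Polynomial.aeval N) ((Polynomial.X : Polynomial k) ^ n) = 0 := by
    simp [hNn]
  have hdvd : minpoly k N ∣ (Polynomial.X : Polynomial k) ^ n := minpoly.dvd k N hXn0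
  have hint : IsIntegral k N := .of_finite k N
  obtain ⟨m, hmn, hassoc⟩ := (dvd_prime_pow Polynomial.prime_X n).mp hdvd
  have hmp : minpoly k N = Polynomial.X ^ m :=
    Polynomial.eq_of_monic_of_associated (minpoly.monic hint) (Polynomial.monic_X_pow m) hassoc
  have hNm : N ^ m = 0 := by
    have h4 := minpoly.aeval k N
    rw [hmp] at h4
    simpa using h4
  have hmeq : m = n := by
    by_contra h
    exact hNn1 (pow_eq_zero_of_le (by omega) hNm)
  have hker : RingHom.ker (Polynomial.aeval N : Polynomial k →ₐ[k] Module.End k V)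
      = Ideal.span {(Polynomial.X : Polynomial k) ^ n} := by
    rw [minpoly.ker_aeval_eq_span_minpoly, hmp, hmeq, Ideal.submodule_span_eq]
  exact ⟨(Ideal.quotientKerEquivRange ρ).trans <|
    (Subalgebra.equivOfEq _ _ hrange).trans <|
    (Ideal.quotientKerEquivRange (Polynomial.aeval N)).symm.trans <|
    Ideal.quotientEquivAlgOfEq k hker⟩
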